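/- Let N, D ≥ 1, let R > 1, and let W, W_V ∈ ℝ^{D×D} and X, X̃ ∈ ℝ^{N×D} be matrices satisfying ‖W‖ ≤ R, ‖W_V‖ ≤ R, ‖X‖ ≤ R, and ‖X̃‖ ≤ R in spectral norm. Define the self-attention map F(X) = D(X)^{-1} · A(X) · X W_V, where A(X) ∈ ℝ^{N×N} has entries A(X)_{i,j} = exp((X W Xᵀ)_{i,j}) and D(X) ∈ ℝ^{N×N} is the diagonal matrix whose i-th diagonal entry is Σ_{j=1}^N A(X)_{i,j}. Then the self-attention map is Lipschitz in spectral norm on this ball: ‖F(X) − F(X̃)‖ ≤ 5 R⁴ N D · ‖X − X̃‖. -/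

import Mathlib

open scoped Matrix.Norms.L2Operator
open Matrix

section Aux

lemma exp_core (t : ℝ) (ht : 0 ≤ t) : Real.exp t - 1 ≤ t * (Real.exp t + 1) / 2 := by
  set g : ℝ → ℝ := fun s => s * (Real.exp s + 1) / 2 - (Real.exp s - 1) with hg
  have hderiv : ∀ s : ℝ, HasDerivAt g ((Real.exp s + 1 + s * Real.exp s) / 2 - Real.exp s) s := by
    intro s
    have h1 : HasDerivAt (fun s : ℝ => s * (Real.exp s + 1))
        (1 * (Real.exp s + 1) + s * Real.exp s) s :=
      (hasDerivAt_id s).mul ((Real.hasDerivAt_exp s).add_const 1)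
    have h2 := (h1.div_const 2).sub ((Real.hasDerivAt_exp s).sub_const 1)
    have h3 : (Real.exp s + 1 + s * Real.exp s) / 2 - Real.exp s
        = (1 * (Real.exp s + 1) + s * Real.exp s) / 2 - Real.exp s := by ring
    rw [h3]
    exact h2
  have hmono : MonotoneOn g (Set.Ici (0:ℝ)) := by
    apply monotoneOn_of_deriv_nonneg (convex_Ici 0)
    · exact Continuous.continuousOn (by fun_prop)
    · intro x _
      exact (hderiv x).differentiableAt.differentiableWithinAt
    · intro x _
      rw [(hderiv x).deriv]
      have hE : (0:ℝ) < Real.exp x := Real.exp_pos x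
      have h1 : 1 - x ≤ Real.exp (-x) := by linarith [Real.add_one_le_exp (-x)]
      have h2 : Real.exp (-x) * Real.exp x = 1 := by rw [← Real.exp_add]; simp
      nlinarith [mul_le_mul_of_nonneg_right h1 hE.le]
  have h := hmono Set.self_mem_Ici (Set.mem_Ici.mpr ht) ht
  have h0 : g 0 = 0 := by simp [hg]
  rw [h0] at h
  simp only [hg] at h
  linarith

lemma abs_exp_sub_exp (a b : ℝ) :
    |Real.exp a - Real.exp b| ≤ |a - b| * (Real.exp a + Real.exp b) / 2 := by
  wlog hab : b ≤ a with H
  · have := H b a (le_of_not_ge hab)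
    rw [abs_sub_comm, abs_sub_comm a b]
    linarith [this]
  have ht : 0 ≤ a - b := sub_nonneg.mpr hab
  have hc := exp_core (a - b) ht
  have hE : (0:ℝ) < Real.exp b := Real.exp_pos b
  have hxe : Real.exp a = Real.exp b * Real.exp (a - b) := by
    rw [← Real.exp_add]; ring_nf
  rw [abs_of_nonneg (sub_nonneg.mpr (Real.exp_le_exp.mpr hab)), abs_of_nonneg ht]
  nlinarith [mul_le_mul_of_nonneg_left hc hE.le]

lemma coord_le {n : ℕ} (x : EuclideanSpace ℝ (Fin n)) (i : Fin n) : |x i| ≤ ‖x‖ := by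
  have h1 : (x i)^2 ≤ ∑ k, ‖x k‖^2 := by
    have := Finset.single_le_sum (f := fun k => ‖x k‖^2) (fun k _ => by positivity)
      (Finset.mem_univ i)
    simpa [Real.norm_eq_abs, sq_abs] using this
  calc |x i| = Real.sqrt ((x i)^2) := (Real.sqrt_sq_eq_abs _).symm
    _ ≤ Real.sqrt (∑ k, ‖x k‖^2) := Real.sqrt_le_sqrt h1
    _ = ‖x‖ := (EuclideanSpace.norm_eq x).symm

lemma entry_le {m n : ℕ} (A : Matrix (Fin m) (Fin n) ℝ) (i : Fin m) (j : Fin n) :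
    |A i j| ≤ ‖A‖ := by
  set f := LinearMap.toContinuousLinearMap (Matrix.toEuclideanLin A) with hf
  have h1 := coord_le (f (EuclideanSpace.single j (1:ℝ))) i
  have h2 : f (EuclideanSpace.single j (1:ℝ)) i = A i j := by
    show (A.mulVec (Pi.single j (1:ℝ))) i = A i j
    simp [Matrix.mulVec_single]
  have h3 := f.le_opNorm (EuclideanSpace.single j (1:ℝ))
  rw [EuclideanSpace.norm_single, norm_one, mul_one] at h3
  rw [h2] at h1
  exact h1.trans h3

lemma opNorm_le_rows {m n : ℕ} (A : Matrix (Fin m) (Fin n) ℝ) (c : Fin m → ℝ)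
    (hc : ∀ i, Real.sqrt (∑ j, (A i j)^2) ≤ c i) : ‖A‖ ≤ Real.sqrt (∑ i, (c i)^2) := by
  rw [Matrix.l2_opNorm_def]
  refine ContinuousLinearMap.opNorm_le_bound _ (Real.sqrt_nonneg _) fun x => ?_
  set T := (Matrix.toEuclideanLin (𝕜 := ℝ) (m := Fin m) (n := Fin n)).trans
    LinearMap.toContinuousLinearMap A with hT
  have happ : ∀ i, T x i = ∑ j, A i j * x j := by
    intro i
    show (A.mulVec x) i = _
    simp [Matrix.mulVec, dotProduct]
  have hnx : ‖x‖ = Real.sqrt (∑ j, (x j)^2) := by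
    rw [EuclideanSpace.norm_eq]
    simp [Real.norm_eq_abs, sq_abs]
  have hbound : ∑ i, ‖T x i‖^2 ≤ (∑ i, (c i)^2) * (∑ j, (x j)^2) := by
    rw [Finset.sum_mul]
    refine Finset.sum_le_sum fun i _ => ?_
    rw [happ i, Real.norm_eq_abs, sq_abs]
    have h1 := Finset.sum_mul_sq_le_sq_mul_sq Finset.univ (fun j => A i j) (fun j => x j)
    have h2 : (∑ j, (A i j)^2) ≤ (c i)^2 := by
      have h0 : (0:ℝ) ≤ ∑ j, (A i j)^2 := by positivity
      nlinarith [hc i, Real.sq_sqrt h0, Real.sqrt_nonneg (∑ j, (A i j)^2)]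
    have h3 : (0:ℝ) ≤ ∑ j, (x j)^2 := by positivity
    calc (∑ j, A i j * x j)^2 ≤ (∑ j, (A i j)^2) * (∑ j, (x j)^2) := h1
      _ ≤ (c i)^2 * (∑ j, (x j)^2) := mul_le_mul_of_nonneg_right h2 h3
  calc ‖T x‖ = Real.sqrt (∑ i, ‖T x i‖^2) := EuclideanSpace.norm_eq _
    _ ≤ Real.sqrt ((∑ i, (c i)^2) * (∑ j, (x j)^2)) := Real.sqrt_le_sqrt hbound
    _ = Real.sqrt (∑ i, (c i)^2) * Real.sqrt (∑ j, (x j)^2) :=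
        Real.sqrt_mul (by positivity) _
    _ = Real.sqrt (∑ i, (c i)^2) * ‖x‖ := by rw [hnx]

lemma opNorm_transpose {m n : ℕ} (A : Matrix (Fin m) (Fin n) ℝ) : ‖Aᵀ‖ = ‖A‖ := by
  rw [← Matrix.conjTranspose_eq_transpose_of_trivial, Matrix.l2_opNorm_conjTranspose]

end Aux

noncomputable def specNorm {m n : ℕ} (A : Matrix (Fin m) (Fin n) ℝ) : ℝ :=
  ‖LinearMap.toContinuousLinearMap (Matrix.toEuclideanLin A)‖

lemma specNorm_eq {m n : ℕ} (A : Matrix (Fin m) (Fin n) ℝ) : specNorm A = ‖A‖ := rfl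

/-- Self-attention: `F(X) = D(X)⁻¹ · A(X) · (X · W_V)` with `A(X)ᵢⱼ = exp((X W Xᵀ)ᵢⱼ)`
and `D(X)` the diagonal matrix of row sums of `A(X)`. -/
noncomputable def attn {N D : ℕ} (W WV : Matrix (Fin D) (Fin D) ℝ)
    (X : Matrix (Fin N) (Fin D) ℝ) : Matrix (Fin N) (Fin D) ℝ :=
  (Matrix.diagonal fun i => ∑ j, Real.exp ((X * W * X.transpose) i j))⁻¹ *
    (Matrix.of fun i j => Real.exp ((X * W * X.transpose) i j)) * (X * WV)

set_option maxHeartbeats 2000000 in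
/-- Lipschitz bound in spectral norm for the self-attention module on a spectral-norm ball of
radius R: ‖F(X) − F(X̃)‖ ≤ 5 R⁴ N D · ‖X − X̃‖. -/
theorem stmt_4 (N D : ℕ) (hN : 1 ≤ N) (hD : 1 ≤ D) (R : ℝ) (hR : 1 < R)
    (W WV : Matrix (Fin D) (Fin D) ℝ) (X Xt : Matrix (Fin N) (Fin D) ℝ)
    (hW : specNorm W ≤ R) (hWV : specNorm WV ≤ R)
    (hX : specNorm X ≤ R) (hXt : specNorm Xt ≤ R) :
    specNorm (attn W WV X - attn W WV Xt) ≤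
      5 * R ^ 4 * (N : ℝ) * (D : ℝ) * specNorm (X - Xt) := by
  have hNe : Nonempty (Fin N) := ⟨⟨0, hN⟩⟩
  have hR0 : (0:ℝ) < R := lt_trans one_pos hR
  simp only [specNorm_eq] at hW hWV hX hXt ⊢
  set S : Matrix (Fin N) (Fin N) ℝ := X * W * X.transpose with hS
  set St : Matrix (Fin N) (Fin N) ℝ := Xt * W * Xt.transpose with hSt
  set d : Fin N → ℝ := fun i => ∑ j, Real.exp (S i j) with hd
  set dt : Fin N → ℝ := fun i => ∑ j, Real.exp (St i j) with hdt
  have hdpos : ∀ i, 0 < d i := fun i =>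
    Finset.sum_pos (fun j _ => Real.exp_pos _) Finset.univ_nonempty
  have hdtpos : ∀ i, 0 < dt i := fun i =>
    Finset.sum_pos (fun j _ => Real.exp_pos _) Finset.univ_nonempty
  set P : Matrix (Fin N) (Fin N) ℝ := Matrix.of (fun i j => Real.exp (S i j) / d i) with hP
  set Pt : Matrix (Fin N) (Fin N) ℝ := Matrix.of (fun i j => Real.exp (St i j) / dt i) with hPt
  have hinv : ∀ (v : Fin N → ℝ), (∀ i, v i ≠ 0) →
      (Matrix.diagonal v)⁻¹ = Matrix.diagonal (fun i => (v i)⁻¹) := by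
    intro v hv
    apply Matrix.inv_eq_left_inv
    rw [Matrix.diagonal_mul_diagonal,
      show (fun i => (v i)⁻¹ * v i) = fun _ => (1:ℝ) from funext fun i => inv_mul_cancel₀ (hv i),
      Matrix.diagonal_one]
  have hattnX : attn W WV X = P * (X * WV) := by
    show (Matrix.diagonal d)⁻¹ * (Matrix.of fun i j => Real.exp (S i j)) * (X * WV)
        = P * (X * WV)
    rw [hinv d (fun i => (hdpos i).ne')]
    congr 1
    ext i j
    rw [Matrix.diagonal_mul]
    simp only [hP, Matrix.of_apply]
    rw [div_eq_inv_mul]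
  have hattnXt : attn W WV Xt = Pt * (Xt * WV) := by
    show (Matrix.diagonal dt)⁻¹ * (Matrix.of fun i j => Real.exp (St i j)) * (Xt * WV)
        = Pt * (Xt * WV)
    rw [hinv dt (fun i => (hdtpos i).ne')]
    congr 1
    ext i j
    rw [Matrix.diagonal_mul]
    simp only [hPt, Matrix.of_apply]
    rw [div_eq_inv_mul]
  have hProw : ∀ i, ∑ j, P i j = 1 := by
    intro i
    simp only [hP, Matrix.of_apply]
    rw [← Finset.sum_div]
    exact div_self (hdpos i).ne'
  have hPtrow : ∀ i, ∑ j, Pt i j = 1 := by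
    intro i
    simp only [hPt, Matrix.of_apply]
    rw [← Finset.sum_div]
    exact div_self (hdtpos i).ne'
  set δ : ℝ := ‖X - Xt‖ with hδ
  have hδ0 : (0:ℝ) ≤ δ := norm_nonneg _
  set ε : ℝ := 2 * R^2 * δ with hε
  have hε0 : (0:ℝ) ≤ ε := by positivity
  -- entrywise bound on S - St
  have hSdiff : ∀ (i k : Fin N), |S i k - St i k| ≤ ε := by
    intro i k
    have hid : S - St = (X - Xt) * W * X.transpose + Xt * W * (X - Xt).transpose := by
      rw [hS, hSt]
      simp only [Matrix.sub_mul, Matrix.mul_sub, Matrix.transpose_sub]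
      abel
    have h1 : S i k - St i k
        = ((X - Xt) * W * X.transpose) i k + (Xt * W * (X - Xt).transpose) i k := by
      have h := congrFun (congrFun hid i) k
      simpa [Matrix.sub_apply, Matrix.add_apply] using h
    have e1 : |((X - Xt) * W * X.transpose) i k| ≤ δ * R * R := by
      refine (entry_le _ i k).trans ?_
      calc ‖(X - Xt) * W * X.transpose‖ ≤ ‖(X - Xt) * W‖ * ‖X.transpose‖ :=
            Matrix.l2_opNorm_mul _ _
        _ ≤ ‖X - Xt‖ * ‖W‖ * ‖X.transpose‖ :=
            mul_le_mul_of_nonneg_right (Matrix.l2_opNorm_mul _ _) (norm_nonneg _)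
        _ ≤ δ * R * R := by
            rw [opNorm_transpose]
            exact mul_le_mul (mul_le_mul le_rfl hW (norm_nonneg _) hδ0) hX (norm_nonneg _)
              (by positivity)
    have e2 : |(Xt * W * (X - Xt).transpose) i k| ≤ R * R * δ := by
      refine (entry_le _ i k).trans ?_
      calc ‖Xt * W * (X - Xt).transpose‖ ≤ ‖Xt * W‖ * ‖(X - Xt).transpose‖ :=
            Matrix.l2_opNorm_mul _ _
        _ ≤ ‖Xt‖ * ‖W‖ * ‖(X - Xt).transpose‖ :=
            mul_le_mul_of_nonneg_right (Matrix.l2_opNorm_mul _ _) (norm_nonneg _)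
        _ ≤ R * R * δ := by
            rw [opNorm_transpose]
            exact mul_le_mul (mul_le_mul hXt hW (norm_nonneg _) hR0.le) le_rfl hδ0
              (by positivity)
    calc |S i k - St i k| ≤ |((X - Xt) * W * X.transpose) i k|
          + |(Xt * W * (X - Xt).transpose) i k| := h1 ▸ abs_add_le _ _
      _ ≤ δ * R * R + R * R * δ := add_le_add e1 e2
      _ = ε := by rw [hε]; ring
  -- entrywise bound on P - Pt
  have hPdiffentry : ∀ (i j : Fin N), |P i j - Pt i j| ≤ ε * (P i j + Pt i j) := by
    intro i j
    have hnum : Real.exp (S i j) * dt i - Real.exp (St i j) * d i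
        = ∑ k, (Real.exp (S i j + St i k) - Real.exp (St i j + S i k)) := by
      rw [Finset.sum_sub_distrib]
      simp only [Real.exp_add, ← Finset.mul_sum]
      rfl
    have hfrac : P i j - Pt i j
        = (Real.exp (S i j) * dt i - Real.exp (St i j) * d i) / (d i * dt i) := by
      simp only [hP, hPt, Matrix.of_apply]
      rw [div_sub_div _ _ (hdpos i).ne' (hdtpos i).ne']
      ring
    have habs : |∑ k, (Real.exp (S i j + St i k) - Real.exp (St i j + S i k))|
        ≤ ε * (Real.exp (S i j) * dt i + Real.exp (St i j) * d i) := by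
      calc |∑ k, (Real.exp (S i j + St i k) - Real.exp (St i j + S i k))|
          ≤ ∑ k, |Real.exp (S i j + St i k) - Real.exp (St i j + S i k)| :=
            Finset.abs_sum_le_sum_abs _ _
        _ ≤ ∑ k, ε * (Real.exp (S i j + St i k) + Real.exp (St i j + S i k)) := by
            refine Finset.sum_le_sum fun k _ => ?_
            have h1 := abs_exp_sub_exp (S i j + St i k) (St i j + S i k)
            have h2 : |(S i j + St i k) - (St i j + S i k)| ≤ 2 * ε := by
              have heq : (S i j + St i k) - (St i j + S i k)
                  = (S i j - St i j) - (S i k - St i k) := by ring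
              rw [heq]
              calc |(S i j - St i j) - (S i k - St i k)|
                  ≤ |S i j - St i j| + |S i k - St i k| := abs_sub _ _
                _ ≤ 2 * ε := by linarith [hSdiff i j, hSdiff i k]
            have h3 : (0:ℝ) ≤ Real.exp (S i j + St i k) + Real.exp (St i j + S i k) := by
              positivity
            calc |Real.exp (S i j + St i k) - Real.exp (St i j + S i k)|
                ≤ |(S i j + St i k) - (St i j + S i k)|
                  * (Real.exp (S i j + St i k) + Real.exp (St i j + S i k)) / 2 := h1
              _ ≤ (2 * ε) * (Real.exp (S i j + St i k) + Real.exp (St i j + S i k)) / 2 := by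
                  have := mul_le_mul_of_nonneg_right h2 h3
                  linarith
              _ = ε * (Real.exp (S i j + St i k) + Real.exp (St i j + S i k)) := by ring
        _ = ε * (Real.exp (S i j) * dt i + Real.exp (St i j) * d i) := by
            rw [← Finset.mul_sum]
            congr 1
            rw [Finset.sum_add_distrib]
            simp only [Real.exp_add, ← Finset.mul_sum]
            rfl
    have hddt : (0:ℝ) < d i * dt i := mul_pos (hdpos i) (hdtpos i)
    rw [hfrac, abs_div, abs_of_pos hddt, div_le_iff₀ hddt]
    have hRHS : ε * (P i j + Pt i j) * (d i * dt i)
        = ε * (Real.exp (S i j) * dt i + Real.exp (St i j) * d i) := by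
      simp only [hP, hPt, Matrix.of_apply]
      field_simp
      rw [div_add_div _ _ (hdpos i).ne' (hdtpos i).ne', mul_div_assoc',
        div_eq_iff (mul_ne_zero (hdpos i).ne' (hdtpos i).ne')]
      ring
    rw [hRHS, hnum]
    exact habs
  -- row sums of |P - Pt|
  have hrow1 : ∀ i, ∑ j, |P i j - Pt i j| ≤ 2 * ε := by
    intro i
    calc ∑ j, |P i j - Pt i j| ≤ ∑ j, ε * (P i j + Pt i j) :=
          Finset.sum_le_sum fun j _ => hPdiffentry i j
      _ = ε * ((∑ j, P i j) + ∑ j, Pt i j) := by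
          rw [← Finset.mul_sum, Finset.sum_add_distrib]
      _ = 2 * ε := by rw [hProw i, hPtrow i]; ring
  -- operator norm bounds
  have hPd : ‖P - Pt‖ ≤ 2 * ε * Real.sqrt N := by
    have hc : ∀ i, Real.sqrt (∑ j, ((P - Pt) i j)^2) ≤ 2 * ε := by
      intro i
      have h1 : ∑ j, ((P - Pt) i j)^2 ≤ (∑ j, |(P - Pt) i j|)^2 := by
        have := Finset.sum_sq_le_sq_sum_of_nonneg (s := Finset.univ)
          (f := fun j => |(P - Pt) i j|) (fun j _ => abs_nonneg _)
        simpa [sq_abs] using this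
      have h2 : ∑ j, |(P - Pt) i j| ≤ 2 * ε := by
        simpa [Matrix.sub_apply] using hrow1 i
      calc Real.sqrt (∑ j, ((P - Pt) i j)^2)
          ≤ Real.sqrt ((∑ j, |(P - Pt) i j|)^2) := Real.sqrt_le_sqrt h1
        _ = ∑ j, |(P - Pt) i j| := Real.sqrt_sq (by positivity)
        _ ≤ 2 * ε := h2
    calc ‖P - Pt‖ ≤ Real.sqrt (∑ _i : Fin N, (2 * ε)^2) := opNorm_le_rows _ _ hc
      _ = Real.sqrt ((N:ℝ) * (2 * ε)^2) := by
          rw [Finset.sum_const, Finset.card_univ, Fintype.card_fin, nsmul_eq_mul]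
      _ = Real.sqrt N * (2 * ε) := by
          rw [Real.sqrt_mul (by positivity), Real.sqrt_sq (by positivity)]
      _ = 2 * ε * Real.sqrt N := by ring
  have hPtn : ‖Pt‖ ≤ Real.sqrt N := by
    have hnn : ∀ i j, 0 ≤ Pt i j := fun i j => by
      simp only [hPt, Matrix.of_apply]
      exact div_nonneg (Real.exp_pos _).le (hdtpos i).le
    have hc : ∀ i, Real.sqrt (∑ j, (Pt i j)^2) ≤ (1:ℝ) := by
      intro i
      have h1 : ∑ j, (Pt i j)^2 ≤ (∑ j, Pt i j)^2 :=
        Finset.sum_sq_le_sq_sum_of_nonneg (fun j _ => hnn i j)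
      calc Real.sqrt (∑ j, (Pt i j)^2) ≤ Real.sqrt ((∑ j, Pt i j)^2) := Real.sqrt_le_sqrt h1
        _ = ∑ j, Pt i j := Real.sqrt_sq (Finset.sum_nonneg fun j _ => hnn i j)
        _ ≤ 1 := le_of_eq (hPtrow i)
    calc ‖Pt‖ ≤ Real.sqrt (∑ _i : Fin N, (1:ℝ)^2) := opNorm_le_rows _ _ hc
      _ = Real.sqrt N := by simp
  -- decomposition
  have hdecomp : attn W WV X - attn W WV Xt
      = (P - Pt) * (X * WV) + Pt * ((X - Xt) * WV) := by
    rw [hattnX, hattnXt, Matrix.sub_mul P Pt (X * WV), Matrix.sub_mul X Xt WV,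
      Matrix.mul_sub Pt]
    abel
  rw [hdecomp]
  have hXWVn : ‖X * WV‖ ≤ R * R := by
    calc ‖X * WV‖ ≤ ‖X‖ * ‖WV‖ := Matrix.l2_opNorm_mul _ _
      _ ≤ R * R := mul_le_mul hX hWV (norm_nonneg _) hR0.le
  have t1 : ‖(P - Pt) * (X * WV)‖ ≤ (2 * ε * Real.sqrt N) * (R * R) := by
    calc ‖(P - Pt) * (X * WV)‖ ≤ ‖P - Pt‖ * ‖X * WV‖ := Matrix.l2_opNorm_mul _ _
      _ ≤ (2 * ε * Real.sqrt N) * (R * R) :=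
          mul_le_mul hPd hXWVn (norm_nonneg _) (by positivity)
  have t2 : ‖Pt * ((X - Xt) * WV)‖ ≤ Real.sqrt N * (δ * R) := by
    have h4 : ‖(X - Xt) * WV‖ ≤ δ * R := by
      calc ‖(X - Xt) * WV‖ ≤ ‖X - Xt‖ * ‖WV‖ := Matrix.l2_opNorm_mul _ _
        _ ≤ δ * R := mul_le_mul le_rfl hWV (norm_nonneg _) hδ0
    calc ‖Pt * ((X - Xt) * WV)‖ ≤ ‖Pt‖ * ‖(X - Xt) * WV‖ := Matrix.l2_opNorm_mul _ _
      _ ≤ Real.sqrt N * (δ * R) :=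
          mul_le_mul hPtn h4 (norm_nonneg _) (Real.sqrt_nonneg _)
  have hN1 : (1:ℝ) ≤ (N:ℝ) := by exact_mod_cast hN
  have hD1 : (1:ℝ) ≤ (D:ℝ) := by exact_mod_cast hD
  have hsq : Real.sqrt N ≤ (N:ℝ) := by
    nlinarith [Real.sq_sqrt (by positivity : (0:ℝ) ≤ (N:ℝ)), Real.sqrt_nonneg (N:ℝ)]
  have hR4 : 4 * R^4 + R ≤ 5 * R^4 := by nlinarith [sq_nonneg R, sq_nonneg (R - 1), sq_nonneg (R^2 - 1)]
  have hsND : Real.sqrt N ≤ (N:ℝ) * (D:ℝ) :=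
    hsq.trans (le_mul_of_one_le_right (by positivity) hD1)
  calc ‖(P - Pt) * (X * WV) + Pt * ((X - Xt) * WV)‖
      ≤ ‖(P - Pt) * (X * WV)‖ + ‖Pt * ((X - Xt) * WV)‖ := norm_add_le _ _
    _ ≤ (2 * ε * Real.sqrt N) * (R * R) + Real.sqrt N * (δ * R) := add_le_add t1 t2
    _ = Real.sqrt N * δ * (4 * R^4 + R) := by rw [hε]; ring
    _ ≤ Real.sqrt N * δ * (5 * R^4) :=
        mul_le_mul_of_nonneg_left hR4 (by positivity)
    _ ≤ ((N:ℝ) * (D:ℝ)) * δ * (5 * R^4) :=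
        mul_le_mul_of_nonneg_right (mul_le_mul_of_nonneg_right hsND hδ0) (by positivity)
    _ = 5 * R^4 * (N:ℝ) * (D:ℝ) * δ := by ring
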